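/- Let b > 1, let a ∈ S_b, and let c, d ∈ (−1,1) with d ≠ 0. Then it is not the case that both ψ(a,b,c,d) = 0 and (∂ψ/∂a)(a,b,c,d) = 0; here ∂ψ/∂a denotes the derivative of the function a ↦ ψ(a,b,c,d). -/

import Mathlib

noncomputable def psi (a b c d : ℝ) : ℝ :=
  (a^2 - 1) * (b^2 + 1) * (a^2*b^2 + a^2 + a*b^2 - a + b^2 + 1) * (c^2 + d^2 - 2*c^2*d^2)
    + a * (b^2 - 1) * (a^2*b^2 + a^2 + 2*a*b^2 - 4*a*b - 2*a + b^2 + 1) * c * d * (c^2 - d^2)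

noncomputable def Sb (b : ℝ) : Set ℝ :=
  if b < 1 + Real.sqrt 2 then
    Set.Ioo ((1 + 2*b - b^2) / (b^2 + 1)) ((b^2 + 1) / (1 + 2*b - b^2))
  else Set.Ioi 0

lemma negcur_pos2 (a b : ℝ) (hb : 1 < b) (hw : 2*b+1 ≤ b^2) (ha : 0 < a) :
    0 < 8*b*(b-1)*(3*b^2+1)*a^3 + (30*b^4-36*b^3+20*b^2-28*b-2)*(a^2*(a-1)^2)
      + 2*(b^2+1)*(5*b^2-4*b+1)*(a*(a-1)^4) + (b^2+1)^2*(a-1)^6 := by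
  have hbeta : 0 ≤ 30*b^4-36*b^3+20*b^2-28*b-2 := by
    nlinarith [mul_nonneg (sub_nonneg.2 hw) (sq_nonneg b), mul_pos (by linarith : (0:ℝ) < b) (by linarith : (0:ℝ) < b-1)]
  have t1 : 0 < 8*b*(b-1)*(3*b^2+1)*a^3 := by
    apply mul_pos _ (pow_pos ha 3)
    apply mul_pos (by nlinarith) (by nlinarith)
  have t2 : 0 ≤ (30*b^4-36*b^3+20*b^2-28*b-2)*(a^2*(a-1)^2) :=
    mul_nonneg hbeta (by positivity)
  have t3 : 0 ≤ 2*(b^2+1)*(5*b^2-4*b+1)*(a*(a-1)^4) := by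
    apply mul_nonneg _ (by positivity)
    nlinarith [sq_nonneg (2*b-1), sq_nonneg b]
  have t4 : 0 ≤ (b^2+1)^2*(a-1)^6 := by positivity
  linarith

lemma negcur_pos1 (a b : ℝ) (hb : 1 < b) (hw : b^2 < 2*b+1)
    (hp : 0 < (1+b^2)*a - (1+2*b-b^2)) (hq : 0 < (1+b^2) - (1+2*b-b^2)*a) :
    0 < 8*b*(b-1)*(3*b^2+1)*a^3 + (30*b^4-36*b^3+20*b^2-28*b-2)*(a^2*(a-1)^2)
      + 2*(b^2+1)*(5*b^2-4*b+1)*(a*(a-1)^4) + (b^2+1)^2*(a-1)^6 := by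
  have hm : 0 < 1+2*b-b^2 := by linarith
  have ha : 0 < a := by nlinarith [sq_nonneg b]
  rcases le_or_gt 0 (30*b^4-36*b^3+20*b^2-28*b-2) with hbeta | hbeta
  · have t1 : 0 < 8*b*(b-1)*(3*b^2+1)*a^3 := by
      apply mul_pos _ (pow_pos ha 3)
      apply mul_pos (by nlinarith) (by nlinarith)
    have t2 : 0 ≤ (30*b^4-36*b^3+20*b^2-28*b-2)*(a^2*(a-1)^2) :=
      mul_nonneg hbeta (by positivity)
    have t3 : 0 ≤ 2*(b^2+1)*(5*b^2-4*b+1)*(a*(a-1)^4) := by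
      apply mul_nonneg _ (by positivity)
      nlinarith [sq_nonneg (2*b-1), sq_nonneg b]
    have t4 : 0 ≤ (b^2+1)^2*(a-1)^6 := by positivity
    linarith
  · have hK : 0 < 8*b*(3*b^2+1)*(1+b^2)*(1+2*b-b^2) + 4*b^2*(b-1)*(30*b^4-36*b^3+20*b^2-28*b-2) := by
      nlinarith [mul_pos (by linarith : (0:ℝ) < b-1) hm, sq_nonneg (b-1), mul_pos (by linarith : (0:ℝ) < b) (by linarith : (0:ℝ) < b-1), sq_nonneg (b^2-1)]
    have hden : 0 < (1+b^2)*(1+2*b-b^2) := mul_pos (by positivity) hm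
    have r1 : 0 < (b-1)*(8*b*(3*b^2+1)*(1+b^2)*(1+2*b-b^2) + 4*b^2*(b-1)*(30*b^4-36*b^3+20*b^2-28*b-2))*a^3 :=
      mul_pos (mul_pos (by linarith) hK) (pow_pos ha 3)
    have r2 : 0 < (-(30*b^4-36*b^3+20*b^2-28*b-2))*(a^2*(((1+b^2)*a-(1+2*b-b^2))*((1+b^2)-(1+2*b-b^2)*a))) :=
      mul_pos (by linarith) (mul_pos (by positivity) (mul_pos hp hq))
    have r3 : 0 ≤ (1+b^2)*(1+2*b-b^2)*(2*(b^2+1)*(5*b^2-4*b+1)*(a*(a-1)^4) + (b^2+1)^2*(a-1)^6) := by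
      apply mul_nonneg hden.le
      have h3 : 0 ≤ 2*(b^2+1)*(5*b^2-4*b+1)*(a*(a-1)^4) := by
        apply mul_nonneg _ (by positivity)
        nlinarith [sq_nonneg (2*b-1), sq_nonneg b]
      have h4 : 0 ≤ (b^2+1)^2*(a-1)^6 := by positivity
      linarith
    have key : (1+b^2)*(1+2*b-b^2) * (8*b*(b-1)*(3*b^2+1)*a^3 + (30*b^4-36*b^3+20*b^2-28*b-2)*(a^2*(a-1)^2)
      + 2*(b^2+1)*(5*b^2-4*b+1)*(a*(a-1)^4) + (b^2+1)^2*(a-1)^6)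
      = (b-1)*(8*b*(3*b^2+1)*(1+b^2)*(1+2*b-b^2) + 4*b^2*(b-1)*(30*b^4-36*b^3+20*b^2-28*b-2))*a^3
        + (-(30*b^4-36*b^3+20*b^2-28*b-2))*(a^2*(((1+b^2)*a-(1+2*b-b^2))*((1+b^2)-(1+2*b-b^2)*a)))
        + (1+b^2)*(1+2*b-b^2)*(2*(b^2+1)*(5*b^2-4*b+1)*(a*(a-1)^4) + (b^2+1)^2*(a-1)^6) := by
      ring
    by_contra hcon
    push_neg at hcon
    have hle : (1+b^2)*(1+2*b-b^2) * (8*b*(b-1)*(3*b^2+1)*a^3 + (30*b^4-36*b^3+20*b^2-28*b-2)*(a^2*(a-1)^2)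
      + 2*(b^2+1)*(5*b^2-4*b+1)*(a*(a-1)^4) + (b^2+1)^2*(a-1)^6) ≤ 0 :=
      mul_nonpos_iff.mpr (Or.inl ⟨hden.le, hcon⟩)
    linarith [key ▸ hle]

lemma deriv_quartic (p q r s t x : ℝ) :
    deriv (fun y : ℝ => p*y^4 + q*y^3 + r*y^2 + s*y + t) x = 4*p*x^3 + 3*q*x^2 + 2*r*x + s := by
  have h : HasDerivAt (fun y : ℝ => p*y^4 + q*y^3 + r*y^2 + s*y + t)
      (4*p*x^3 + 3*q*x^2 + 2*r*x + s) x := by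
    have h4 := (hasDerivAt_pow 4 x).const_mul p
    have h3 := (hasDerivAt_pow 3 x).const_mul q
    have h2 := (hasDerivAt_pow 2 x).const_mul r
    have h1 := (hasDerivAt_id x).const_mul s
    have h0 := hasDerivAt_const x t
    exact ((((h4.add h3).add h2).add h1).add h0).congr_deriv (by push_cast; ring)
  exact h.deriv

set_option maxHeartbeats 4000000 in
theorem no_double_root (a b c d : ℝ) (hb : 1 < b) (ha : a ∈ Sb b)
    (hc : c ∈ Set.Ioo (-1 : ℝ) 1) (hd : d ∈ Set.Ioo (-1 : ℝ) 1) (hd0 : d ≠ 0) :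
    ¬ (psi a b c d = 0 ∧ deriv (fun a' => psi a' b c d) a = 0) := by
  rintro ⟨hpsi0, hderiv0⟩
  obtain ⟨hc1, hc2⟩ := hc
  obtain ⟨hd1, hd2⟩ := hd
  have hb2 : (0:ℝ) < b^2 - 1 := by nlinarith
  have hs2 : Real.sqrt 2 ^ 2 = 2 := Real.sq_sqrt (by norm_num)
  have hs0 : 0 ≤ Real.sqrt 2 := Real.sqrt_nonneg 2
  have hNC : 0 < (8*b*(b-1)*(3*b^2+1)*a^3 + (30*b^4-36*b^3+20*b^2-28*b-2)*(a^2*(a-1)^2) + 2*(b^2+1)*(5*b^2-4*b+1)*(a*(a-1)^4) + (b^2+1)^2*(a-1)^6) := by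
    simp only [Sb] at ha
    split_ifs at ha with hcase
    · obtain ⟨hlo, hhi⟩ := ha
      have hm : 0 < 1 + 2*b - b^2 := by
        nlinarith [hs2, mul_pos (show (0:ℝ) < Real.sqrt 2 - (b-1) by linarith)
          (show (0:ℝ) < b-1 by linarith),
          mul_nonneg (show (0:ℝ) ≤ Real.sqrt 2 - (b-1) by linarith) hs0]
      have hbp : (0:ℝ) < b^2 + 1 := by positivity
      have hp : 0 < (1+b^2)*a - (1+2*b-b^2) := by
        have h := (div_lt_iff₀ hbp).mp hlo
        nlinarith
      have hq : 0 < (1+b^2) - (1+2*b-b^2)*a := by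
        have h := (lt_div_iff₀ hm).mp hhi
        nlinarith
      exact negcur_pos1 a b hb (by linarith) hp hq
    · have hge : 1 + Real.sqrt 2 ≤ b := not_lt.mp hcase
      have hw : 2*b+1 ≤ b^2 := by
        nlinarith [hs2, mul_nonneg (show (0:ℝ) ≤ b-1-Real.sqrt 2 by linarith)
          (show (0:ℝ) ≤ b-1 by linarith),
          mul_nonneg (show (0:ℝ) ≤ b-1-Real.sqrt 2 by linarith) hs0]
      exact negcur_pos2 a b hb hw (Set.mem_Ioi.mp ha)
  clear ha
  have hu : 0 < c^2 + d^2 - 2*c^2*d^2 := by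
    have h1 : 0 < d^2 := by positivity
    have h2 : 0 < 1 - c^2 := by nlinarith
    nlinarith [mul_pos h1 h2, mul_nonneg (sq_nonneg c) (show (0:ℝ) ≤ 1 - d^2 by nlinarith)]
  clear hc1 hc2 hd1 hd2 hd0
  simp only [psi] at hpsi0
  have hfun : (fun a' : ℝ => psi a' b c d)
      = (fun x : ℝ => (d^2 + c^2 - 2*c^2*d^2 + 2*b^2*d^2 + 2*b^2*c^2 - 4*b^2*c^2*d^2 + b^4*d^2 + b^4*c^2 - 2*b^4*c^2*d^2)*x^4 + (-d^2 + c*d^3 - c^2 + 2*c^2*d^2 - c^3*d + b^4*d^2 - b^4*c*d^3 + b^4*c^2 - 2*b^4*c^2*d^2 + b^4*c^3*d)*x^3 + (-2*c*d^3 + 2*c^3*d - 4*b*c*d^3 + 4*b*c^3*d + 4*b^2*c*d^3 - 4*b^2*c^3*d + 4*b^3*c*d^3 - 4*b^3*c^3*d - 2*b^4*c*d^3 + 2*b^4*c^3*d)*x^2 + (d^2 + c*d^3 + c^2 - 2*c^2*d^2 - c^3*d - b^4*d^2 - b^4*c*d^3 - b^4*c^2 + 2*b^4*c^2*d^2 +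 b^4*c^3*d)*x + (-d^2 - c^2 + 2*c^2*d^2 - 2*b^2*d^2 - 2*b^2*c^2 + 4*b^2*c^2*d^2 - b^4*d^2 - b^4*c^2 + 2*b^4*c^2*d^2)) := by
    funext x
    simp only [psi]
    ring
  rw [hfun, deriv_quartic] at hderiv0
  clear hfun
  have hWu : (1 + 2*b^2 - 2*b^6 - b^8 - 4*a - 8*a*b - 8*a*b^3 + 8*a*b^4 + 8*a*b^5 + 8*a*b^7 - 4*a*b^8 + 5*a^2 + 4*a^2*b + 2*a^2*b^2 - 4*a^2*b^3 - 4*a^2*b^5 - 2*a^2*b^6 + 4*a^2*b^7 - 5*a^2*b^8 - 4*a^3 + 8*a^3*b^4 - 4*a^3*b^8 + 5*a^4 + 4*a^4*b + 2*a^4*b^2 - 4*a^4*b^3 - 4*a^4*b^5 - 2*a^4*b^6 + 4*a^4*b^7 - 5*a^4*b^8 - 4*a^5 - 8*a^5*b - 8*a^5*b^3 + 8*a^5*b^4 + 8*a^5*b^5 + 8*a^5*b^7 - 4*a^5*b^8 + a^6 + 2*a^6*b^2 - 2*a^6*b^6 - a^6*b^8) * (c^2 + d^2 - 2*c^2*d^2)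 = 0 := by
    linear_combination ((b^2-1)*(3*a^2*b^2 + 3*a^2 + 4*a*b^2 - 8*a*b - 4*a + b^2 + 1)) * hpsi0
      - (a*(b^2-1)*(a^2*b^2 + a^2 + 2*a*b^2 - 4*a*b - 2*a + b^2 + 1)) * hderiv0
  clear hpsi0 hderiv0
  have hW : (1 + 2*b^2 - 2*b^6 - b^8 - 4*a - 8*a*b - 8*a*b^3 + 8*a*b^4 + 8*a*b^5 + 8*a*b^7 - 4*a*b^8 + 5*a^2 + 4*a^2*b + 2*a^2*b^2 - 4*a^2*b^3 - 4*a^2*b^5 - 2*a^2*b^6 + 4*a^2*b^7 - 5*a^2*b^8 - 4*a^3 + 8*a^3*b^4 - 4*a^3*b^8 + 5*a^4 + 4*a^4*b + 2*a^4*b^2 - 4*a^4*b^3 - 4*a^4*b^5 - 2*a^4*b^6 + 4*a^4*b^7 - 5*a^4*b^8 - 4*a^5 - 8*a^5*b - 8*a^5*b^3 + 8*a^5*b^4 + 8*a^5*b^5 + 8*a^5*b^7 - 4*a^5*b^8 + a^6 + 2*a^6*b^2 - 2*a^6*b^6 - a^6*b^8) = 0 := by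
    rcases mul_eq_zero.mp hWu with h | h
    · exact h
    · exact absurd h hu.ne'
  have hid : (b^2+1)*(b^2-1)*(8*b*(b-1)*(3*b^2+1)*a^3 + (30*b^4-36*b^3+20*b^2-28*b-2)*(a^2*(a-1)^2) + 2*(b^2+1)*(5*b^2-4*b+1)*(a*(a-1)^4) + (b^2+1)^2*(a-1)^6) = 0 := by linear_combination (-1 : ℝ) * hW
  have hpos : 0 < (b^2+1)*(b^2-1)*(8*b*(b-1)*(3*b^2+1)*a^3 + (30*b^4-36*b^3+20*b^2-28*b-2)*(a^2*(a-1)^2) + 2*(b^2+1)*(5*b^2-4*b+1)*(a*(a-1)^4) + (b^2+1)^2*(a-1)^6) :=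
    mul_pos (mul_pos (by positivity) hb2) hNC
  exact absurd hid hpos.ne'
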